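/- Let b ≥ 2 and n ≥ 1 be integers and let s₁,…,sₙ define a generalized Hammersley point set R_n with points z(t) = (z₁(t), z₂(t)). Then ∑_{t ∈ {0,…,b−1}ⁿ} (1 − z₁(t))(1 − z₂(t)) = 1 + b^{−n−1} · ∑_{t ∈ {0,…,b−1}ⁿ} ∑_{i=1}^{n} ∑_{j=1}^{n} b^{i−j} t_i s_j(t_j). -/

import Mathlib

open Finset

/-- First coordinate of the generalized Hammersley point: `z₁ = tₙ/b + ⋯ + t₁/bⁿ`. -/
noncomputable def z1 (b n : ℕ) (t : Fin n → Fin b) : ℝ :=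
  ∑ i : Fin n, ((t i : ℕ) : ℝ) / (b:ℝ) ^ (n - (i:ℕ))

/-- Second coordinate: `z₂ = s₁(t₁)/b + s₂(t₂)/b² + ⋯ + sₙ(tₙ)/bⁿ`. -/
noncomputable def z2 (b n : ℕ) (s : Fin n → ℕ → ℕ) (t : Fin n → Fin b) : ℝ :=
  ∑ i : Fin n, ((s i (t i : ℕ) : ℕ) : ℝ) / (b:ℝ) ^ ((i:ℕ) + 1)

/-- Each `s i` is either the identity or the reflection `t ↦ b−1−t` on digits. -/
def IsDigitMaps (b n : ℕ) (s : Fin n → ℕ → ℕ) : Prop :=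
  ∀ i, (∀ k, k < b → s i k = k) ∨ (∀ k, k < b → s i k = b - 1 - k)

lemma sum_digit_real (b : ℕ) :
    ∑ k ∈ Finset.range b, ((k : ℕ) : ℝ) = (b:ℝ) * ((b:ℝ) - 1) / 2 := by
  induction b with
  | zero => simp
  | succ m ih =>
    rw [Finset.sum_range_succ, ih]
    push_cast
    ring

lemma sum_eval {b n : ℕ} (i : Fin n) (f : Fin b → ℝ) :
    ∑ t : Fin n → Fin b, f (t i) = (b:ℝ) ^ (n - 1) * ∑ k : Fin b, f k := by
  classical
  let e := Equiv.funSplitAt i (Fin b)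
  have h : ∑ t : Fin n → Fin b, f (t i)
      = ∑ p : Fin b × ({ j : Fin n // j ≠ i } → Fin b), f p.1 := by
    refine Fintype.sum_equiv e _ _ (fun t => ?_)
    simp [e, Equiv.funSplitAt]
  rw [h, Fintype.sum_prod_type]
  have hcard : Fintype.card ({ j : Fin n // j ≠ i } → Fin b) = b ^ (n - 1) := by
    rw [Fintype.card_fun, Fintype.card_fin]
    congr 1
    rw [Fintype.card_subtype_compl, Fintype.card_subtype_eq, Fintype.card_fin]
  simp only [Finset.sum_const, nsmul_eq_mul]
  rw [← Finset.mul_sum, Finset.card_univ, hcard]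
  norm_cast

lemma sum_z1 (b n : ℕ) (hb : 2 ≤ b) (hn : 1 ≤ n) :
    ∑ t : Fin n → Fin b, z1 b n t = ((b:ℝ) ^ n - 1) / 2 := by
  have hbR : (2:ℝ) ≤ (b:ℝ) := by exact_mod_cast hb
  have hb0 : (b:ℝ) ≠ 0 := by linarith
  have hb1 : (b:ℝ) - 1 ≠ 0 := by linarith
  have hb1' : (b:ℝ) ≠ 1 := by linarith
  unfold z1
  rw [Finset.sum_comm]
  have key : ∀ i : Fin n, ∑ t : Fin n → Fin b, ((t i : ℕ) : ℝ) / (b:ℝ) ^ (n - (i:ℕ))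
      = (b:ℝ) ^ (i:ℕ) * ((b:ℝ) - 1) / 2 := by
    intro i
    rw [sum_eval i (fun k : Fin b => ((k : ℕ) : ℝ) / (b:ℝ) ^ (n - (i:ℕ)))]
    rw [← Finset.sum_div, Fin.sum_univ_eq_sum_range (fun k => ((k : ℕ) : ℝ)) b,
      sum_digit_real]
    have hpow : (b:ℝ) ^ (n - 1) * (b:ℝ) = (b:ℝ) ^ (n - (i:ℕ)) * (b:ℝ) ^ (i:ℕ) := by
      rw [← pow_succ, ← pow_add]
      congr 1
      have := i.isLt
      omega
    have hne : (b:ℝ) ^ (n - (i:ℕ)) ≠ 0 := pow_ne_zero _ hb0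
    field_simp
    linear_combination hpow
  rw [Finset.sum_congr rfl (fun i _ => key i)]
  simp only [mul_div_assoc]
  rw [← Finset.sum_mul, Fin.sum_univ_eq_sum_range (fun i => (b:ℝ) ^ i) n,
    geom_sum_eq hb1' n]
  field_simp

lemma sum_z2 (b n : ℕ) (hb : 2 ≤ b) (hn : 1 ≤ n)
    (s : Fin n → ℕ → ℕ) (hs : IsDigitMaps b n s) :
    ∑ t : Fin n → Fin b, z2 b n s t = ((b:ℝ) ^ n - 1) / 2 := by
  have hbR : (2:ℝ) ≤ (b:ℝ) := by exact_mod_cast hb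
  have hb0 : (b:ℝ) ≠ 0 := by linarith
  have hb1 : (b:ℝ) - 1 ≠ 0 := by linarith
  have hb1' : (b:ℝ) ≠ 1 := by linarith
  unfold z2
  rw [Finset.sum_comm]
  have hsum : ∀ j : Fin n, ∑ k : Fin b, ((s j (k : ℕ) : ℕ) : ℝ)
      = (b:ℝ) * ((b:ℝ) - 1) / 2 := by
    intro j
    rw [Fin.sum_univ_eq_sum_range (fun k => ((s j k : ℕ) : ℝ)) b]
    rcases hs j with h | h
    · rw [Finset.sum_congr rfl (fun k hk => by
        rw [h k (Finset.mem_range.mp hk)]), sum_digit_real]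
    · rw [Finset.sum_congr rfl (fun k hk => by
        rw [h k (Finset.mem_range.mp hk)])]
      rw [Finset.sum_range_reflect (fun k => ((k : ℕ) : ℝ)) b, sum_digit_real]
  have key : ∀ j : Fin n, ∑ t : Fin n → Fin b, ((s j (t j : ℕ) : ℕ) : ℝ) / (b:ℝ) ^ ((j:ℕ) + 1)
      = (b:ℝ) ^ (n - 1 - (j:ℕ)) * ((b:ℝ) - 1) / 2 := by
    intro j
    rw [sum_eval j (fun k : Fin b => ((s j (k : ℕ) : ℕ) : ℝ) / (b:ℝ) ^ ((j:ℕ) + 1))]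
    rw [← Finset.sum_div, hsum j]
    have hpow : (b:ℝ) ^ (n - 1) * (b:ℝ) = (b:ℝ) ^ (n - 1 - (j:ℕ)) * (b:ℝ) ^ ((j:ℕ) + 1) := by
      rw [← pow_succ, ← pow_add]
      congr 1
      have := j.isLt
      omega
    have hne : (b:ℝ) ^ ((j:ℕ) + 1) ≠ 0 := pow_ne_zero _ hb0
    field_simp
    linear_combination hpow
  rw [Finset.sum_congr rfl (fun j _ => key j)]
  simp only [mul_div_assoc]
  rw [← Finset.sum_mul, Fin.sum_univ_eq_sum_range (fun j => (b:ℝ) ^ (n - 1 - j)) n,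
    Finset.sum_range_reflect (fun j => (b:ℝ) ^ j) n, geom_sum_eq hb1' n]
  field_simp

lemma z1_mul_z2 (b n : ℕ) (hb : 2 ≤ b) (s : Fin n → ℕ → ℕ) (t : Fin n → Fin b) :
    z1 b n t * z2 b n s t
      = (b:ℝ) ^ (-(n:ℤ) - 1) * ∑ i : Fin n, ∑ j : Fin n,
          (b:ℝ) ^ (((i:ℕ):ℤ) - ((j:ℕ):ℤ)) * ((t i : ℕ) : ℝ) * ((s j (t j : ℕ) : ℕ) : ℝ) := by
  have hb0 : (b:ℝ) ≠ 0 := by positivity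
  unfold z1 z2
  rw [Finset.sum_mul_sum, Finset.mul_sum]
  refine Finset.sum_congr rfl (fun i _ => ?_)
  rw [Finset.mul_sum]
  refine Finset.sum_congr rfl (fun j _ => ?_)
  have hkey : (b:ℝ) ^ (-(n:ℤ) - 1) * (b:ℝ) ^ (((i:ℕ):ℤ) - ((j:ℕ):ℤ))
      = ((b:ℝ) ^ (n - (i:ℕ)))⁻¹ * ((b:ℝ) ^ ((j:ℕ) + 1))⁻¹ := by
    rw [← zpow_natCast (b:ℝ) (n - (i:ℕ)), ← zpow_natCast (b:ℝ) ((j:ℕ) + 1),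
      ← zpow_neg, ← zpow_neg, ← zpow_add₀ hb0, ← zpow_add₀ hb0]
    congr 1
    have := i.isLt
    push_cast
    omega
  field_simp at hkey ⊢
  linear_combination (-(((t i : ℕ) : ℝ) * ((s j (t j : ℕ) : ℕ) : ℝ))) * hkey

/-- Lemma 4.7: `∑_t (1 − z₁(t))(1 − z₂(t)) = 1 + b^{−n−1}·∑_t ∑_{i,j=1}^n b^{i−j} t_i s_j(t_j)`. -/
theorem sum_corner_products (b n : ℕ) (hb : 2 ≤ b) (hn : 1 ≤ n)
    (s : Fin n → ℕ → ℕ) (hs : IsDigitMaps b n s) :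
    (∑ t : Fin n → Fin b, (1 - z1 b n t) * (1 - z2 b n s t))
      = 1 + (b:ℝ) ^ (-(n:ℤ) - 1) *
          ∑ t : Fin n → Fin b, ∑ i : Fin n, ∑ j : Fin n,
            (b:ℝ) ^ (((i:ℕ):ℤ) - ((j:ℕ):ℤ)) * ((t i : ℕ) : ℝ) * ((s j (t j : ℕ) : ℕ) : ℝ) := by
  have expand : ∀ t : Fin n → Fin b,
      (1 - z1 b n t) * (1 - z2 b n s t)
        = (1 - z1 b n t - z2 b n s t) + z1 b n t * z2 b n s t := by
    intro t; ring
  rw [Finset.sum_congr rfl (fun t _ => expand t), Finset.sum_add_distrib,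
    Finset.sum_sub_distrib, Finset.sum_sub_distrib, Finset.sum_const]
  rw [sum_z1 b n hb hn, sum_z2 b n hb hn s hs]
  rw [Finset.sum_congr rfl (fun t _ => z1_mul_z2 b n hb s t), ← Finset.mul_sum]
  have hcard : (Finset.univ : Finset (Fin n → Fin b)).card = b ^ n := by
    simp [Fintype.card_fun]
  rw [hcard, nsmul_eq_mul]
  push_cast
  ring
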